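/- Let G be a simple triangle-free graph on n ≥ 3 vertices such that G has no perfect matching and the minimum degree of G is at least (n-1)/2. Then the number of vertices n is odd. -/

import Mathlib

/-- A triangle-free graph on `n ≥ 3` vertices without a perfect matching and with
minimum degree at least `(n-1)/2` has an odd number of vertices. -/
theorem stmt_1 {V : Type*} [Fintype V] [DecidableEq V]
    (G : SimpleGraph V) [DecidableRel G.Adj]
    (hn : 3 ≤ Fintype.card V)
    (htf : G.CliqueFree 3)
    (hpm : ¬ ∃ M : G.Subgraph, M.IsPerfectMatching)
    (hdeg : ∀ v : V, ((Fintype.card V : ℝ) - 1) / 2 ≤ G.degree v) :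
    Odd (Fintype.card V) := by
  by_contra hodd
  rw [← Nat.not_even_iff_odd] at hodd; rw [not_not] at hodd
  set n := Fintype.card V with hndef
  -- no triangles
  have notri : ∀ a b c : V, G.Adj a b → G.Adj a c → G.Adj b c → False := by
    intro a b c h1 h2 h3
    exact htf {a, b, c} (SimpleGraph.is3Clique_triple_iff.mpr ⟨h1, h2, h3⟩)
  -- degree bound in ℕ
  have hdeg' : ∀ w : V, n ≤ 2 * G.degree w := by
    intro w
    have h1 : (n : ℝ) - 1 ≤ 2 * G.degree w := by
      have := hdeg w
      linarith
    have h2 : (n : ℕ) - 1 ≤ 2 * G.degree w := by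
      have : ((n - 1 : ℕ) : ℝ) ≤ ((2 * G.degree w : ℕ) : ℝ) := by
        push_cast
        have : (1:ℝ) ≤ n := by exact_mod_cast Nat.one_le_iff_ne_zero.mpr (by omega)
        rw [Nat.cast_sub (by omega)]
        push_cast
        linarith
      exact_mod_cast this
    obtain ⟨k, hk⟩ := hodd
    omega
  -- pick adjacent u, v
  have hne : Nonempty V := Fintype.card_pos_iff.mp (by omega)
  obtain ⟨u⟩ := hne
  have hdu : 0 < G.degree u := by have := hdeg' u; omega
  obtain ⟨v, hv⟩ := (G.degree_pos_iff_exists_adj u).mp hdu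
  set A := G.neighborFinset v with hA
  set B := G.neighborFinset u with hB
  have hdisj : Disjoint A B := by
    rw [Finset.disjoint_left]
    intro w hwA hwB
    rw [hA, SimpleGraph.mem_neighborFinset] at hwA
    rw [hB, SimpleGraph.mem_neighborFinset] at hwB
    exact notri u v w hv hwB hwA
  have hcardA : A.card = G.degree v := (G.card_neighborFinset_eq_degree v).symm ▸ rfl
  have hcardB : B.card = G.degree u := (G.card_neighborFinset_eq_degree u).symm ▸ rfl
  have hsum : A.card + B.card ≤ n := by
    rw [← Finset.card_union_of_disjoint hdisj]
    exact (Finset.card_le_univ _)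
  have h2A : n ≤ 2 * A.card := by rw [hcardA]; exact hdeg' v
  have h2B : n ≤ 2 * B.card := by rw [hcardB]; exact hdeg' u
  have hAcard : 2 * A.card = n := by omega
  have hBcard : 2 * B.card = n := by omega
  have huniv : A ∪ B = Finset.univ := by
    apply Finset.eq_univ_of_card
    rw [Finset.card_union_of_disjoint hdisj]
    omega
  -- every vertex of A has neighborhood exactly B, and vice versa
  have keyA : ∀ a : V, a ∈ A → G.neighborFinset a = B := by
    intro a ha
    have hsub : G.neighborFinset a ⊆ B := by
      intro w hw
      rw [SimpleGraph.mem_neighborFinset] at hw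
      by_contra hwB
      have hwA : w ∈ A := by
        have : w ∈ A ∪ B := huniv ▸ Finset.mem_univ w
        rcases Finset.mem_union.mp this with h | h
        · exact h
        · exact absurd h hwB
      rw [hA, SimpleGraph.mem_neighborFinset] at hwA ha
      exact notri v a w ha hwA hw
    apply Finset.eq_of_subset_of_card_le hsub
    have : 2 * (G.neighborFinset a).card = 2 * G.degree a := by
      rw [G.card_neighborFinset_eq_degree]
    have := hdeg' a
    omega
  have keyB : ∀ b : V, b ∈ B → G.neighborFinset b = A := by
    intro b hb
    have hsub : G.neighborFinset b ⊆ A := by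
      intro w hw
      rw [SimpleGraph.mem_neighborFinset] at hw
      by_contra hwA
      have hwB : w ∈ B := by
        have : w ∈ A ∪ B := huniv ▸ Finset.mem_univ w
        rcases Finset.mem_union.mp this with h | h
        · exact absurd h hwA
        · exact h
      rw [hB, SimpleGraph.mem_neighborFinset] at hwB hb
      exact notri u b w hb hwB hw
    apply Finset.eq_of_subset_of_card_le hsub
    have : 2 * (G.neighborFinset b).card = 2 * G.degree b := by
      rw [G.card_neighborFinset_eq_degree]
    have := hdeg' b
    omega
  -- bijection between A and B
  have hcardeq : Fintype.card A = Fintype.card B := by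
    simp only [Fintype.card_coe]
    omega
  let e : A ≃ B := Fintype.equivOfCardEq hcardeq
  have hmemB : ∀ x : V, x ∉ A → x ∈ B := by
    intro x hx
    have : x ∈ A ∪ B := huniv ▸ Finset.mem_univ x
    rcases Finset.mem_union.mp this with h | h
    · exact absurd h hx
    · exact h
  let f : V → V := fun x => if h : x ∈ A then (e ⟨x, h⟩ : V) else (e.symm ⟨x, hmemB x h⟩ : V)
  have hfA : ∀ x (h : x ∈ A), f x = (e ⟨x, h⟩ : V) := by
    intro x h; simp only [f, dif_pos h]
  have hfB : ∀ x (h : x ∉ A), f x = (e.symm ⟨x, hmemB x h⟩ : V) := by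
    intro x h; simp only [f, dif_neg h]
  have hnotA : ∀ b : V, b ∈ B → b ∉ A := fun b hb => Finset.disjoint_right.mp hdisj hb
  have hinv : ∀ x, f (f x) = x := by
    intro x
    by_cases h : x ∈ A
    · rw [hfA x h]
      have hmem : ((e ⟨x, h⟩ : B) : V) ∉ A := hnotA _ (e ⟨x, h⟩).2
      rw [hfB _ hmem]
      have : (⟨((e ⟨x, h⟩ : B) : V), hmemB _ hmem⟩ : B) = e ⟨x, h⟩ := Subtype.ext rfl
      rw [this, Equiv.symm_apply_apply]
    · rw [hfB x h]
      have hmem : ((e.symm ⟨x, hmemB x h⟩ : A) : V) ∈ A := (e.symm ⟨x, hmemB x h⟩).2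
      rw [hfA _ hmem]
      have : (⟨((e.symm ⟨x, hmemB x h⟩ : A) : V), hmem⟩ : A) = e.symm ⟨x, hmemB x h⟩ :=
        Subtype.ext rfl
      rw [this, Equiv.apply_symm_apply]
  have hadj : ∀ x, G.Adj x (f x) := by
    intro x
    by_cases h : x ∈ A
    · rw [hfA x h]
      have : ((e ⟨x, h⟩ : B) : V) ∈ G.neighborFinset x := by
        rw [keyA x h]; exact (e ⟨x, h⟩).2
      rwa [SimpleGraph.mem_neighborFinset] at this
    · rw [hfB x h]
      have : ((e.symm ⟨x, hmemB x h⟩ : A) : V) ∈ G.neighborFinset x := by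
        rw [keyB x (hmemB x h)]; exact (e.symm ⟨x, hmemB x h⟩).2
      rwa [SimpleGraph.mem_neighborFinset] at this
  -- build the perfect matching
  apply hpm
  refine ⟨⟨Set.univ, fun x y => f x = y ∧ G.Adj x y, fun {x y} h => h.2,
    fun {x y} h => Set.mem_univ x, ?_⟩, ?_⟩
  · constructor; intro x y h
    refine ⟨?_, h.2.symm⟩
    rw [← h.1, hinv]
  · rw [SimpleGraph.Subgraph.isPerfectMatching_iff]
    intro x
    refine ⟨f x, ⟨rfl, hadj x⟩, ?_⟩
    intro y hy
    exact hy.1.symm
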